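/- arXiv:1108.4391 — 5 statements merged into one kernel-verified Lean document; each statement's English description precedes it below -/
import Mathlib

section
/- For every nonnegative integer n, the number of partitions of n into at most 3 parts equals the integer nearest to (n+3)^2/12. -/
open Finset

def Tset (n : ℕ) : Finset (ℕ × ℕ) :=
  (Finset.range (n+1) ×ˢ Finset.range (n+1)).filter
    (fun p => p.2 ≤ p.1 ∧ 2*p.1 + p.2 ≤ n)

def S (n : ℕ) : ℕ := (Tset n).card

lemma sort_eq_of {s : Multiset ℕ} {l : List ℕ} (hl : l.Pairwise (· ≤ ·))
    (h : (l : Multiset ℕ) = s) : Multiset.sort s (· ≤ ·) = l := by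
  refine List.Perm.eq_of_pairwise' (Multiset.pairwise_sort s _) hl ?_
  rw [← Multiset.coe_eq_coe, Multiset.sort_eq, h]

lemma rev3 (a b c : ℕ) :
    (a ::ₘ b ::ₘ c ::ₘ (0 : Multiset ℕ)) = c ::ₘ b ::ₘ a ::ₘ 0 := by
  rw [Multiset.cons_swap a b, Multiset.cons_swap a c, Multiset.cons_swap b c]

lemma sort3 {s : Multiset ℕ} (h : Multiset.card s = 3) :
    ∃ x y z, Multiset.sort s (· ≤ ·) = [x, y, z] ∧ x ≤ y ∧ y ≤ z ∧
      x + y + z = s.sum ∧ s = x ::ₘ y ::ₘ z ::ₘ 0 := by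
  set l := Multiset.sort s (· ≤ ·) with hls
  have hlen : l.length = 3 := by rw [hls, Multiset.length_sort, h]
  have hsort : l.Pairwise (· ≤ ·) := Multiset.pairwise_sort s _
  have hcoe : (l : Multiset ℕ) = s := Multiset.sort_eq s _
  match l, hlen with
  | [x, y, z], _ =>
    refine ⟨x, y, z, rfl, ?_, ?_, ?_, ?_⟩
    · have := List.pairwise_cons.mp hsort; exact this.1 y (by simp)
    · have := (List.pairwise_cons.mp (List.pairwise_cons.mp hsort).2); exact this.1 z (by simp)
    · rw [← hcoe]; simp; ring
    · rw [← hcoe]; rfl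

lemma pad_filter (s : Multiset ℕ) :
    s.filter (· ≠ 0) + Multiset.replicate (Multiset.card s -
      Multiset.card (s.filter (· ≠ 0))) 0 = s := by
  have h1 : s.filter (fun x => ¬ x ≠ 0) = s.filter (· = 0) := by
    apply Multiset.filter_congr; intro x _; simp
  have h2 : s.filter (· = 0) = Multiset.replicate (s.count 0) 0 := by
    rw [show Multiset.filter (· = 0) s = Multiset.filter (Eq 0) s from
      Multiset.filter_congr (fun x _ => by simp [eq_comm]), Multiset.filter_eq]
  have h3 := Multiset.filter_add_not (fun x => x ≠ 0) s
  have h4 : Multiset.card s = Multiset.card (s.filter (· ≠ 0)) + s.count 0 := by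
    conv_lhs => rw [← h3]
    rw [Multiset.card_add, h1, h2, Multiset.card_replicate]
  rw [h4]
  simp only [Nat.add_sub_cancel_left]
  rw [← h2, ← h1, h3]

/-- `pParts m n` is the number of partitions of `n` into at most `m` parts. -/
def pParts (m n : ℕ) : ℕ :=
  Fintype.card {p : n.Partition // p.parts.card ≤ m}

def toPair (s : Multiset ℕ) : ℕ × ℕ :=
  ((Multiset.sort s (· ≤ ·)).getD 1 0, (Multiset.sort s (· ≤ ·)).getD 0 0)

lemma toPair_eq {s : Multiset ℕ} {x y z : ℕ} (h : Multiset.sort s (· ≤ ·) = [x, y, z]) :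
    toPair s = (y, x) := by simp [toPair, h]

lemma mem_Tset {n b c : ℕ} : (b, c) ∈ Tset n ↔ c ≤ b ∧ 2*b + c ≤ n := by
  simp only [Tset, Finset.mem_filter, Finset.mem_product, Finset.mem_range]
  constructor
  · rintro ⟨-, h⟩; exact h
  · rintro ⟨h1, h2⟩; exact ⟨⟨by omega, by omega⟩, h1, h2⟩

section eqv
variable (n : ℕ)

def eqv : {p : n.Partition // p.parts.card ≤ 3} ≃ {q : ℕ × ℕ // q ∈ Tset n} where
  toFun p := ⟨toPair (p.1.parts + Multiset.replicate (3 - Multiset.card p.1.parts) 0), by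
    set m := p.1.parts + Multiset.replicate (3 - Multiset.card p.1.parts) 0 with hm
    have hm3 : Multiset.card m = 3 := by
      have := p.2; simp only [hm, Multiset.card_add, Multiset.card_replicate]; omega
    have hmsum : m.sum = n := by
      simp [hm, Multiset.sum_replicate, p.1.parts_sum]
    obtain ⟨x, y, z, hl, hxy, hyz, hsum, -⟩ := sort3 hm3
    rw [toPair_eq hl, mem_Tset]
    rw [hmsum] at hsum
    omega⟩
  invFun q := ⟨Nat.Partition.ofSums n ((n - (q.1.1 + q.1.2)) ::ₘ q.1.1 ::ₘ q.1.2 ::ₘ 0)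
      (by
        have := mem_Tset.mp (show (q.1.1, q.1.2) ∈ Tset n from q.2)
        simp only [Multiset.sum_cons, Multiset.sum_zero]
        omega), by
    rw [Nat.Partition.ofSums_parts]
    refine le_trans (Multiset.card_le_card (Multiset.filter_le _ _)) ?_
    simp⟩
  left_inv p := by
    ext1
    set m := p.1.parts + Multiset.replicate (3 - Multiset.card p.1.parts) 0 with hm
    have hm3 : Multiset.card m = 3 := by
      have := p.2; simp only [hm, Multiset.card_add, Multiset.card_replicate]; omega
    have hmsum : m.sum = n := by
      simp [hm, Multiset.sum_replicate, p.1.parts_sum]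
    obtain ⟨x, y, z, hl, hxy, hyz, hsum, hms⟩ := sort3 hm3
    rw [hmsum] at hsum
    ext1
    have hl' := toPair_eq hl
    rw [hm] at hl'
    simp only [hl', Nat.Partition.ofSums_parts]
    have hz : n - (y + x) = z := by omega
    rw [hz, rev3, ← hms, hm, Multiset.filter_add]
    rw [Multiset.filter_eq_self.mpr (fun i hi => (p.1.parts_pos hi).ne')]
    have : Multiset.filter (· ≠ 0) (Multiset.replicate (3 - Multiset.card (↑p : n.Partition).parts) 0) = 0 := by
      rw [Multiset.filter_eq_nil]
      intro a ha
      simp [Multiset.eq_of_mem_replicate ha]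
    rw [this, add_zero]
  right_inv q := by
    obtain ⟨⟨b, c⟩, hq⟩ := q
    have hbc := mem_Tset.mp hq
    ext1
    simp only [Nat.Partition.ofSums_parts]
    set s0 := (n - (b + c)) ::ₘ b ::ₘ c ::ₘ (0 : Multiset ℕ) with hs0
    have hcard : Multiset.card (Multiset.filter (· ≠ 0) s0) ≤ 3 := by
      refine le_trans (Multiset.card_le_card (Multiset.filter_le _ _)) ?_
      simp [hs0]
    have hpad : Multiset.filter (· ≠ 0) s0 +
        Multiset.replicate (3 - Multiset.card (Multiset.filter (· ≠ 0) s0)) 0 = s0 := by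
      have := pad_filter s0
      have hc3 : Multiset.card s0 = 3 := by simp [hs0]
      rwa [hc3] at this
    rw [hpad]
    have hsort : Multiset.sort s0 (· ≤ ·) = [c, b, n - (b + c)] := by
      apply sort_eq_of
      · refine List.pairwise_cons.mpr ⟨?_, List.pairwise_cons.mpr ⟨?_, List.pairwise_singleton _ _⟩⟩
        · intro a ha; simp at ha; rcases ha with rfl | rfl <;> omega
        · intro a ha; simp at ha; subst ha; omega
      · rw [hs0, rev3]; rfl
    rw [toPair_eq hsort]
  
lemma key : pParts 3 n = S n := by
  rw [pParts, S, ← Fintype.card_coe]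
  exact Fintype.card_congr (eqv n)

end eqv

lemma Sstep (n : ℕ) : S (n+1) = S n + ((n+1)/2 + 1 - (n+3)/3) := by
  classical
  set A := Finset.range (n+2) ×ˢ Finset.range (n+2) with hA
  have hsplit : Tset (n+1) =
      (A.filter (fun p => p.2 ≤ p.1 ∧ 2*p.1 + p.2 ≤ n)) ∪
      (A.filter (fun p => p.2 ≤ p.1 ∧ 2*p.1 + p.2 = n+1)) := by
    ext ⟨b, c⟩
    simp only [Tset, hA, Finset.mem_union, Finset.mem_filter, Finset.mem_product,
      Finset.mem_range]
    omega
  have hT : A.filter (fun p => p.2 ≤ p.1 ∧ 2*p.1 + p.2 ≤ n) = Tset n := by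
    ext ⟨b, c⟩
    simp only [Tset, hA, Finset.mem_filter, Finset.mem_product, Finset.mem_range]
    omega
  have hdisj : Disjoint (A.filter (fun p => p.2 ≤ p.1 ∧ 2*p.1 + p.2 ≤ n))
      (A.filter (fun p => p.2 ≤ p.1 ∧ 2*p.1 + p.2 = n+1)) := by
    rw [Finset.disjoint_left]
    rintro ⟨b, c⟩ h1 h2
    simp only [Finset.mem_filter] at h1 h2
    omega
  have hband : (A.filter (fun p => p.2 ≤ p.1 ∧ 2*p.1 + p.2 = n+1)).card
      = (n+1)/2 + 1 - (n+3)/3 := by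
    rw [← Nat.card_Icc ((n+3)/3) ((n+1)/2)]
    apply Finset.card_nbij' (i := fun p => p.1) (j := fun b => (b, n+1-2*b))
    · rintro ⟨b, c⟩ hm
      simp only [hA, Finset.coe_filter, Set.mem_setOf_eq, Finset.mem_product, Finset.mem_range] at hm
      simp only [Finset.coe_Icc, Set.mem_Icc]
      omega
    · intro b hb
      simp only [Finset.coe_Icc, Set.mem_Icc] at hb
      simp only [hA, Finset.coe_filter, Set.mem_setOf_eq, Finset.mem_product, Finset.mem_range]
      omega
    · rintro ⟨b, c⟩ hm
      simp only [hA, Finset.coe_filter, Set.mem_setOf_eq, Finset.mem_product, Finset.mem_range] at hm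
      have : n+1-2*b = c := by omega
      simp [this]
    · intro b hb
      rfl
  rw [S, hsplit, Finset.card_union_of_disjoint hdisj, hT, hband, S]

lemma Ssix (n : ℕ) : S (n+6) = S n + (n+6) := by
  have h0 : S (n+1) = S n + ((n+1)/2 + 1 - (n+3)/3) := Sstep n
  have h1 : S (n+2) = S (n+1) + ((n+2)/2 + 1 - (n+4)/3) := Sstep (n+1)
  have h2 : S (n+3) = S (n+2) + ((n+3)/2 + 1 - (n+5)/3) := Sstep (n+2)
  have h3 : S (n+4) = S (n+3) + ((n+4)/2 + 1 - (n+6)/3) := Sstep (n+3)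
  have h4 : S (n+5) = S (n+4) + ((n+5)/2 + 1 - (n+7)/3) := Sstep (n+4)
  have h5 : S (n+6) = S (n+5) + ((n+6)/2 + 1 - (n+8)/3) := Sstep (n+5)
  obtain ⟨q, r, hr, rfl⟩ : ∃ q r, r < 6 ∧ n = 6*q + r :=
    ⟨n/6, n%6, Nat.mod_lt _ (by norm_num), (Nat.div_add_mod n 6).symm⟩
  interval_cases r <;> omega

theorem p3_eq_round (n : ℕ) :
    (pParts 3 n : ℤ) = round (((n : ℚ) + 3) ^ 2 / 12) := by
  induction n using Nat.strong_induction_on with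
  | _ n ih =>
    rcases lt_or_ge n 6 with h | h
    · interval_cases n <;> (rw [key]; norm_num [round_eq]) <;> decide
    · obtain ⟨m, rfl⟩ : ∃ m, n = m + 6 := ⟨n - 6, by omega⟩
      have h1 := ih m (by omega)
      have h6 := Ssix m
      rw [key] at h1 ⊢
      have hcast : ((↑(m+6) : ℚ)) = (m:ℚ) + 6 := by push_cast; ring
      have hr : (((m:ℚ) + 6) + 3)^2/12 = ((m:ℚ)+3)^2/12 + (((m : ℤ) + 6 : ℤ) : ℚ) := by
        push_cast; ring
      rw [h6, hcast, hr, round_add_intCast, ← h1]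
      push_cast; ring
end

section
/- For every positive integer m, there exist a positive integer N (namely N = lcm(1,...,m)) and polynomials P_0, ..., P_{N-1} with rational coefficients, each of degree at most m-1, such that for all nonnegative integers n, p_m(n) = P_{n mod N}(n). -/
open Polynomial Finset Multiset

namespace PPQ


/-- forward difference with step `N` -/
def Δ (N : ℕ) (f : ℕ → ℚ) : ℕ → ℚ := fun n => f (n + N) - f n

lemma faulhaber_poly (p : ℕ) : ∃ R : ℚ[X], R.natDegree ≤ p + 1 ∧
    ∀ n : ℕ, (∑ j ∈ range n, (j : ℚ) ^ p) = R.eval (n : ℚ) := by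
  refine ⟨∑ i ∈ range (p + 1), C (_root_.bernoulli i * ((p + 1).choose i) / (p + 1)) * X ^ (p + 1 - i),
    ?_, ?_⟩
  · apply natDegree_sum_le_of_forall_le
    intro i hi
    refine (natDegree_C_mul_le _ _).trans ?_
    simpa using Nat.sub_le (p+1) i
  · intro n
    rw [sum_range_pow n p, eval_finset_sum]
    refine Finset.sum_congr rfl fun i _ => ?_
    simp [mul_div_assoc, div_mul_eq_mul_div, mul_comm, mul_assoc, mul_left_comm]

lemma poly_sum (Q : ℚ[X]) : ∃ R : ℚ[X], R.natDegree ≤ Q.natDegree + 1 ∧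
    ∀ n : ℕ, (∑ j ∈ range n, Q.eval (j : ℚ)) = R.eval (n : ℚ) := by
  choose Rp hdeg heval using faulhaber_poly
  refine ⟨∑ p ∈ range (Q.natDegree + 1), C (Q.coeff p) * Rp p, ?_, ?_⟩
  · apply natDegree_sum_le_of_forall_le
    intro p hp
    refine (natDegree_C_mul_le _ _).trans ((hdeg p).trans ?_)
    simp only [Finset.mem_range] at hp; omega
  · intro n
    rw [eval_finset_sum]
    simp only [eval_mul, eval_C, ← heval, mul_sum]
    rw [Finset.sum_comm]
    refine Finset.sum_congr rfl fun j _ => ?_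
    rw [eval_eq_sum_range]

lemma newton : ∀ (d : ℕ) (a : ℕ → ℚ), (Δ 1)^[d + 1] a = 0 →
    ∃ Q : ℚ[X], Q.natDegree ≤ d ∧ ∀ q : ℕ, a q = Q.eval (q : ℚ) := by
  intro d
  induction d with
  | zero =>
    intro a h
    refine ⟨C (a 0), by simp, ?_⟩
    intro q
    rw [eval_C]
    induction q with
    | zero => rfl
    | succ q ih =>
      have h2 := congrFun h q
      simp only [Function.iterate_succ_apply, Function.iterate_zero_apply, Δ, Pi.zero_apply,
        sub_eq_zero] at h2
      rw [← ih, h2]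
  | succ d ih =>
    intro a h
    rw [Function.iterate_succ_apply] at h
    obtain ⟨Q, hQd, hQ⟩ := ih (Δ 1 a) h
    obtain ⟨R, hRd, hR⟩ := poly_sum Q
    refine ⟨C (a 0) + R, ?_, ?_⟩
    · refine (natDegree_add_le _ _).trans ?_
      simp only [natDegree_C]
      omega
    · intro q
      have tel : ∑ i ∈ range q, (a (i + 1) - a i) = a q - a 0 := Finset.sum_range_sub a q
      have : ∑ i ∈ range q, (a (i + 1) - a i) = R.eval (q : ℚ) := by
        rw [← hR]
        exact Finset.sum_congr rfl fun i _ => (hQ i).symm ▸ rfl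
      rw [eval_add, eval_C, ← this, tel]
      ring

lemma iter_shift (N M : ℕ) (r : ℕ) : ∀ (j : ℕ) (g : ℕ → ℚ),
    (Δ 1)^[j] (fun q => g (r + q * N)) = fun q => ((Δ N)^[j] g) (r + q * N) := by
  intro j
  induction j with
  | zero => intro g; rfl
  | succ j ih =>
    intro g
    rw [Function.iterate_succ_apply]
    have h1 : Δ 1 (fun q => g (r + q * N)) = fun q => (Δ N g) (r + q * N) := by
      funext q
      simp only [Δ]
      congr 2
      ring
    rw [h1, ih (Δ N g)]
    funext q
    rw [← Function.iterate_succ_apply]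

lemma qp_of_diff (d N : ℕ) (hN : 0 < N) (f : ℕ → ℚ) (h : (Δ N)^[d + 1] f = 0) :
    ∃ P : ℕ → Polynomial ℚ, (∀ i, (P i).natDegree ≤ d) ∧
      ∀ n : ℕ, f n = (P (n % N)).eval (n : ℚ) := by
  have key : ∀ r : ℕ, ∃ Q : ℚ[X], Q.natDegree ≤ d ∧ ∀ q : ℕ, f (r + q * N) = Q.eval (q : ℚ) := by
    intro r
    apply newton
    rw [iter_shift N N r (d+1) f, h]
    rfl
  choose Q hQd hQ using key
  refine ⟨fun r => (Q r).comp (C ((N : ℚ))⁻¹ * (X - C (r : ℚ))), ?_, ?_⟩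
  · intro i
    refine natDegree_comp_le.trans ?_
    have : (C ((N : ℚ))⁻¹ * (X - C (i : ℚ))).natDegree ≤ 1 :=
      (natDegree_C_mul_le _ _).trans (natDegree_X_sub_C _).le
    calc (Q i).natDegree * (C ((N : ℚ))⁻¹ * (X - C (i : ℚ))).natDegree
        ≤ (Q i).natDegree * 1 := Nat.mul_le_mul_left _ this
      _ ≤ d := by simpa using hQd i
  · intro n
    have hmod : n % N + n / N * N = n := Nat.mod_add_div' n N
    have := hQ (n % N) (n / N)
    rw [hmod] at this
    rw [this, eval_comp]
    congr 1
    have hNQ : (N : ℚ) ≠ 0 := Nat.cast_ne_zero.mpr hN.ne'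
    have : (n : ℚ) = (n % N : ℕ) + (n / N : ℕ) * N := by exact_mod_cast hmod.symm
    simp only [eval_mul, eval_C, eval_sub, eval_X, this]
    field_simp
    ring



lemma pParts_one (n : ℕ) : pParts 1 n = 1 := by
  rw [pParts, Fintype.card_eq_one_iff]
  rcases Nat.eq_zero_or_pos n with rfl | hn
  · exact ⟨⟨default, by simp⟩, fun b => Subtype.ext (Subsingleton.elim _ _)⟩
  · refine ⟨⟨Nat.Partition.indiscrete n, by simp [Nat.Partition.indiscrete_parts hn.ne']⟩, ?_⟩
    rintro ⟨p, hp⟩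
    apply Subtype.ext
    apply Nat.Partition.ext
    rw [Nat.Partition.indiscrete_parts hn.ne']
    rcases (show p.parts.card = 0 ∨ p.parts.card = 1 from by omega) with h | h
    · exfalso
      have := p.parts_sum
      rw [Multiset.card_eq_zero.mp h] at this
      simp at this
      omega
    · obtain ⟨a, ha⟩ := Multiset.card_eq_one.mp h
      have := p.parts_sum
      rw [ha] at this ⊢
      simp at this
      simp [this]

lemma card_le_sum' (A : Multiset ℕ) (hA : ∀ x ∈ A, 1 ≤ x) : A.card ≤ A.sum := by
  induction A using Multiset.induction with
  | empty => simp
  | cons a A ih =>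
    have ha := hA a (mem_cons_self a A)
    have := ih fun x hx => hA x (mem_cons_of_mem hx)
    simp only [Multiset.sum_cons, Multiset.card_cons]
    omega

lemma sum_map_pred (A : Multiset ℕ) (hA : ∀ x ∈ A, 1 ≤ x) :
    (A.map (· - 1)).sum = A.sum - A.card := by
  induction A using Multiset.induction with
  | empty => simp
  | cons a A ih =>
    have ha := hA a (mem_cons_self a A)
    have hA' := fun x hx => hA x (mem_cons_of_mem hx)
    have hcard : A.card ≤ A.sum := card_le_sum' A hA'
    simp only [Multiset.map_cons, Multiset.sum_cons, Multiset.card_cons, ih hA']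
    omega

lemma sum_map_succ (A : Multiset ℕ) : (A.map (· + 1)).sum = A.sum + A.card := by
  induction A using Multiset.induction with
  | empty => simp
  | cons a A ih => simp [ih]; omega

/-- split the parts of a partition into parts ≥ 2 and parts equal to 1 -/
lemma parts_split {s : ℕ} (p : s.Partition) :
    p.parts = p.parts.filter (2 ≤ ·) + Multiset.replicate (p.parts.count 1) 1 := by
  have key : Multiset.filter (fun x => ¬ 2 ≤ x) p.parts
      = Multiset.replicate (p.parts.count 1) 1 := by
    have h1 : Multiset.filter (fun x => ¬ 2 ≤ x) p.parts
        = Multiset.filter (· = 1) p.parts := by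
      apply Multiset.filter_congr
      intro x hx
      have := p.parts_pos hx
      constructor <;> omega
    rw [h1, Multiset.filter_eq']
  conv_lhs => rw [← Multiset.filter_add_not (2 ≤ ·) p.parts]
  rw [key]

/-- partitions of `n + (m+1)` with exactly `m+1` parts are in bijection with partitions of `n`
with at most `m+1` parts -/
def partEquiv (m n : ℕ) :
    {p : (n + (m + 1)).Partition // p.parts.card = m + 1} ≃
      {q : n.Partition // q.parts.card ≤ m + 1} where
  toFun p := by
    refine ⟨⟨(p.1.parts.filter (2 ≤ ·)).map (· - 1), ?_, ?_⟩, ?_⟩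
    · intro i hi
      simp only [Multiset.mem_map, Multiset.mem_filter] at hi
      obtain ⟨x, ⟨_, hx2⟩, rfl⟩ := hi
      omega
    · have hsplit := parts_split p.1
      have hsum := p.1.parts_sum
      have hcard := p.2
      set A := p.1.parts.filter (2 ≤ ·) with hA
      set c1 := p.1.parts.count 1 with hc1
      have h1 : A.sum + c1 = n + (m + 1) := by
        rw [hsplit] at hsum; simpa using hsum
      have h2 : A.card + c1 = m + 1 := by
        rw [hsplit] at hcard; simpa using hcard
      have h3 : A.card ≤ A.sum := card_le_sum' A fun x hx => by
        have := (Multiset.mem_filter.mp hx).2; omega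
      rw [sum_map_pred A fun x hx => by have := (Multiset.mem_filter.mp hx).2; omega]
      omega
    · simp only [Multiset.card_map]
      have hcard := p.2
      calc (p.1.parts.filter (2 ≤ ·)).card ≤ p.1.parts.card := Multiset.card_le_card
            (Multiset.filter_le _ _)
        _ = m + 1 := hcard
  invFun q := by
    refine ⟨⟨q.1.parts.map (· + 1) + Multiset.replicate (m + 1 - q.1.parts.card) 1, ?_, ?_⟩, ?_⟩
    · intro i hi
      rcases Multiset.mem_add.mp hi with h | h
      · simp only [Multiset.mem_map] at h; omega
      · rw [Multiset.eq_of_mem_replicate h]; omega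
    · rw [Multiset.sum_add, sum_map_succ, Multiset.sum_replicate, smul_eq_mul, mul_one,
        q.1.parts_sum]
      have := q.2
      omega
    · simp only [Multiset.card_add, Multiset.card_map, Multiset.card_replicate]
      have := q.2
      omega
  left_inv p := by
    apply Subtype.ext
    apply Nat.Partition.ext
    simp only
    have hsplit := parts_split p.1
    have hcard := p.2
    set A := p.1.parts.filter (2 ≤ ·) with hA
    set c1 := p.1.parts.count 1 with hc1
    have h2 : A.card + c1 = m + 1 := by
      rw [hsplit] at hcard; simpa using hcard
    have hmapA : (A.map (· - 1)).map (· + 1) = A := by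
      rw [Multiset.map_map]
      rw [show ((· + 1) ∘ (· - 1) : ℕ → ℕ) = fun x => x - 1 + 1 from rfl]
      conv_rhs => rw [← Multiset.map_id A]
      apply Multiset.map_congr rfl
      intro x hx
      have := (Multiset.mem_filter.mp hx).2
      simp only [id_eq]
      omega
    rw [Multiset.card_map, hmapA]
    rw [show m + 1 - A.card = c1 from by omega]
    exact hsplit.symm
  right_inv q := by
    apply Subtype.ext
    apply Nat.Partition.ext
    simp only
    rw [Multiset.filter_add, Multiset.filter_map]
    have h1 : Multiset.filter (2 ≤ ·) (Multiset.replicate (m + 1 - q.1.parts.card) 1) = 0 := by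
      rw [Multiset.filter_eq_nil]
      intro a ha
      rw [Multiset.eq_of_mem_replicate ha]
      omega
    have h2 : Multiset.filter ((2 ≤ ·) ∘ (· + 1)) q.1.parts = q.1.parts := by
      apply Multiset.filter_eq_self.mpr
      intro a ha
      have := q.1.parts_pos ha
      simp only [Function.comp]
      omega
    rw [h1, h2, add_zero, Multiset.map_map]
    rw [show ((· - 1) ∘ (· + 1) : ℕ → ℕ) = id from by funext x; simp]
    exact Multiset.map_id _

lemma pParts_rec (m n : ℕ) :
    pParts (m + 1) (n + (m + 1)) = pParts m (n + (m + 1)) + pParts (m + 1) n := by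
  classical
  have hsplit : pParts (m + 1) (n + (m + 1)) =
      Fintype.card {p : (n + (m + 1)).Partition // p.parts.card ≤ m ∨ p.parts.card = m + 1} := by
    rw [pParts]
    apply Fintype.card_congr
    apply Equiv.subtypeEquivRight
    intro p
    omega
  rw [hsplit, Fintype.card_subtype_or_disjoint]
  · rw [pParts]
    congr 1
    rw [Fintype.card_congr (partEquiv m n), pParts]
  · intro c hc1 hc2 a hca
    have := hc1 a hca
    have := hc2 a hca
    simp only at *
    omega


lemma iter_sum (N : ℕ) {ι : Type*} : ∀ (j : ℕ) (s : Finset ι) (g : ι → ℕ → ℚ),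
    (Δ N)^[j] (fun n => ∑ t ∈ s, g t n) = fun n => ∑ t ∈ s, (Δ N)^[j] (g t) n := by
  intro j
  induction j with
  | zero => intro s g; rfl
  | succ j ih =>
    intro s g
    rw [Function.iterate_succ_apply]
    have h1 : Δ N (fun n => ∑ t ∈ s, g t n) = fun n => ∑ t ∈ s, Δ N (g t) n := by
      funext n
      simp only [Δ, ← Finset.sum_sub_distrib]
    rw [h1, ih s (fun t => Δ N (g t))]
    funext n
    exact Finset.sum_congr rfl fun t _ => by rw [← Function.iterate_succ_apply]

lemma claim : ∀ m, 1 ≤ m → ∀ N, (Finset.Icc 1 m).lcm id ∣ N → ∀ c,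
    (Δ N)^[m] (fun n => (pParts m (n + c) : ℚ)) = 0 := by
  intro m hm
  induction m, hm using Nat.le_induction with
  | base =>
    intro N _ c
    funext n
    simp [Δ, pParts_one]
  | succ m hm ih =>
    intro N hdvd c
    have hmem : m + 1 ∈ Finset.Icc 1 (m + 1) := by simp
    have hmN : (m + 1) ∣ N := dvd_trans (by simpa using Finset.dvd_lcm (f := id) hmem) hdvd
    obtain ⟨k, hk⟩ := hmN
    have step : Δ N (fun n => (pParts (m + 1) (n + c) : ℚ))
        = fun n => ∑ t ∈ Finset.range k, (fun n => (pParts m (n + (c + (t + 1) * (m + 1))) : ℚ)) n := by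
      funext n
      simp only [Δ]
      have tel := Finset.sum_range_sub (fun t => (pParts (m + 1) (n + t * (m + 1) + c) : ℚ)) k
      have key : ∀ t : ℕ, (pParts (m + 1) (n + (t + 1) * (m + 1) + c) : ℚ)
          - (pParts (m + 1) (n + t * (m + 1) + c) : ℚ)
          = (pParts m (n + (c + (t + 1) * (m + 1))) : ℚ) := by
        intro t
        have hrec := pParts_rec m (n + t * (m + 1) + c)
        have e1 : n + (t + 1) * (m + 1) + c = n + t * (m + 1) + c + (m + 1) := by ring
        have e2 : n + t * (m + 1) + c + (m + 1) = n + (c + (t + 1) * (m + 1)) := by ring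
        rw [e1, hrec, e2]
        push_cast
        ring
      have e3 : n + k * (m + 1) + c = n + N + c := by rw [hk]; ring
      rw [e3] at tel
      simp only [Nat.zero_mul, Nat.add_zero] at tel
      rw [← tel]
      exact Finset.sum_congr rfl fun t _ => key t
    rw [Function.iterate_succ_apply, step, iter_sum]
    funext n
    rw [Pi.zero_apply]
    apply Finset.sum_eq_zero
    intro t _
    have hsub : (Finset.Icc 1 m).lcm id ∣ (Finset.Icc 1 (m + 1)).lcm id := by
      apply Finset.lcm_dvd
      intro b hb
      exact Finset.dvd_lcm (Finset.mem_Icc.mpr ⟨(Finset.mem_Icc.mp hb).1,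
        (Finset.mem_Icc.mp hb).2.trans (Nat.le_succ m)⟩)
    rw [ih N (hsub.trans hdvd) (c + (t + 1) * (m + 1))]
    rfl

end PPQ

theorem pParts_quasipolynomial (m : ℕ) (hm : 0 < m) :
    ∃ P : ℕ → Polynomial ℚ,
      (∀ i < (Finset.Icc 1 m).lcm id, (P i).natDegree ≤ m - 1) ∧
      ∀ n : ℕ, (pParts m n : ℚ) = (P (n % (Finset.Icc 1 m).lcm id)).eval (n : ℚ) := by
  have hNpos : 0 < (Finset.Icc 1 m).lcm id := by
    apply Nat.pos_of_ne_zero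
    intro h
    rw [Finset.lcm_eq_zero_iff] at h
    simp only [Set.mem_image, Finset.mem_coe, Finset.mem_Icc, id_eq] at h
    obtain ⟨x, ⟨hx1, _⟩, hx0⟩ := h
    omega
  have h := PPQ.claim m hm _ dvd_rfl 0
  have h' : (PPQ.Δ ((Finset.Icc 1 m).lcm id))^[(m - 1) + 1] (fun n => (pParts m n : ℚ)) = 0 := by
    have e : (fun n => (pParts m (n + 0) : ℚ)) = fun n => (pParts m n : ℚ) := by
      funext n; rw [Nat.add_zero]
    rw [show m - 1 + 1 = m from by omega, ← e]
    exact h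
  obtain ⟨P, hPd, hP⟩ := PPQ.qp_of_diff (m - 1) _ hNpos _ h'
  exact ⟨P, fun i _ => hPd i, fun n => hP n⟩
end

section
/- For every finite nonempty set S of positive integers, there exists a positive integer N (namely N = lcm of the elements of S) and polynomials P_0, ..., P_{N-1} with rational coefficients such that p_S(n) = P_{n mod N}(n) for all nonnegative integers n; moreover each P_i has degree at most |S| - 1. -/
/-- `pS S n` is the number of partitions of `n` with all parts in `S`. -/
def pS (S : Finset ℕ) (n : ℕ) : ℕ :=
  Fintype.card {p : n.Partition // ∀ x ∈ p.parts, x ∈ S}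

open Polynomial Finset

open Multiset in
lemma pS_lt (S : Finset ℕ) (s n : ℕ) (hn : n < s) :
    pS S n = pS (S.erase s) n := by
  apply Fintype.card_congr
  apply Equiv.subtypeEquivRight
  intro p
  constructor
  · intro h x hx
    refine Finset.mem_erase.2 ⟨?_, h x hx⟩
    intro rfl
    have h2 := Multiset.single_le_sum (fun y _ => Nat.zero_le (id y)) x hx
    have h3 := p.parts_sum
    omega
  · intro h x hx
    exact Finset.mem_of_mem_erase (h x hx)

open Multiset in
lemma pS_rec (S : Finset ℕ) (s : ℕ) (hs : s ∈ S) (hspos : 0 < s) (n : ℕ) :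
    pS S (n + s) = pS (S.erase s) (n + s) + pS S n := by
  classical
  have key : {p : (n + s).Partition // ∀ x ∈ p.parts, x ∈ S} ≃
      {p : (n + s).Partition // ∀ x ∈ p.parts, x ∈ S.erase s} ⊕
      {p : n.Partition // ∀ x ∈ p.parts, x ∈ S} := by
    refine (Equiv.sumCompl (fun p : {p : (n + s).Partition // ∀ x ∈ p.parts, x ∈ S} =>
      s ∈ p.1.parts)).symm.trans (Equiv.sumComm _ _ |>.trans (Equiv.sumCongr ?_ ?_))
    · -- s ∉ parts
      refine (Equiv.subtypeSubtypeEquivSubtypeInter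
        (fun p : (n + s).Partition => ∀ x ∈ p.parts, x ∈ S)
        (fun p => s ∉ p.parts)).trans (Equiv.subtypeEquivRight ?_)
      intro p
      constructor
      · rintro ⟨h1, h2⟩ x hx
        refine Finset.mem_erase.2 ⟨?_, h1 x hx⟩
        rintro rfl; exact h2 hx
      · intro h
        exact ⟨fun x hx => Finset.mem_of_mem_erase (h x hx),
          fun hx => (Finset.mem_erase.1 (h s hx)).1 rfl⟩
    · -- s ∈ parts
      refine (Equiv.subtypeSubtypeEquivSubtypeInter
        (fun p : (n + s).Partition => ∀ x ∈ p.parts, x ∈ S)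
        (fun p => s ∈ p.parts)).trans ?_
      refine ⟨fun p => ⟨⟨p.1.parts.erase s, ?_, ?_⟩, ?_⟩,
        fun q => ⟨⟨s ::ₘ q.1.parts, ?_, ?_⟩, ?_, ?_⟩, ?_, ?_⟩
      · intro i hi; exact p.1.parts_pos (Multiset.mem_of_mem_erase hi)
      · have h := Multiset.cons_erase p.2.2
        have := p.1.parts_sum
        have h2 : (s ::ₘ p.1.parts.erase s).sum = n + s := by rw [h, this]
        rw [Multiset.sum_cons] at h2
        omega
      · intro x hx; exact p.2.1 x (Multiset.mem_of_mem_erase hx)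
      · intro i hi
        rcases Multiset.mem_cons.1 hi with rfl | hi
        · exact hspos
        · exact q.1.parts_pos hi
      · rw [Multiset.sum_cons, q.1.parts_sum]; omega
      · intro x hx
        rcases Multiset.mem_cons.1 hx with rfl | hx
        · exact hs
        · exact q.2 x hx
      · exact Multiset.mem_cons_self _ _
      · rintro ⟨p, h1, h2⟩
        apply Subtype.ext
        apply Nat.Partition.ext
        exact Multiset.cons_erase h2
      · rintro ⟨q, h⟩
        apply Subtype.ext
        apply Nat.Partition.ext
        exact Multiset.erase_cons_head _ _
  rw [pS, Fintype.card_congr key, Fintype.card_sum]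
  rfl

lemma pS_singleton (s : ℕ) (hs : 0 < s) (n : ℕ) :
    pS {s} n = if n % s = 0 then 1 else 0 := by
  classical
  have hcard : ∀ p : {p : n.Partition // ∀ x ∈ p.parts, x ∈ ({s} : Finset ℕ)},
      p.1.parts = Multiset.replicate (n / s) s ∧ n % s = 0 := by
    rintro ⟨p, hp⟩
    have hall : ∀ x ∈ p.parts, x = s := by
      intro x hx; simpa using hp x hx
    have hrep : p.parts = Multiset.replicate (Multiset.card p.parts) s :=
      Multiset.eq_replicate_card.2 hall
    have hsum := p.parts_sum
    rw [hrep, Multiset.sum_replicate, smul_eq_mul] at hsum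
    have hdvd : s ∣ n := ⟨Multiset.card p.parts, (mul_comm (Multiset.card p.parts) s ▸ hsum).symm⟩
    constructor
    · rw [hrep]
      congr 1
      rw [Nat.div_eq_of_eq_mul_left hs hsum.symm]
    · exact Nat.mod_eq_zero_of_dvd hdvd
  by_cases h : n % s = 0
  · rw [if_pos h, pS]
    rw [Fintype.card_eq_one_iff]
    have hdvd : s ∣ n := Nat.dvd_of_mod_eq_zero h
    refine ⟨⟨⟨Multiset.replicate (n / s) s, ?_, ?_⟩, ?_⟩, ?_⟩
    · intro i hi; rw [Multiset.eq_of_mem_replicate hi]; exact hs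
    · rw [Multiset.sum_replicate, smul_eq_mul, Nat.div_mul_cancel hdvd]
    · intro x hx
      simp [Multiset.eq_of_mem_replicate hx]
    · intro p
      apply Subtype.ext
      apply Nat.Partition.ext
      exact (hcard p).1
  · rw [if_neg h, pS, Fintype.card_eq_zero_iff]
    exact ⟨fun p => h (hcard p).2⟩

lemma poly_discrete_sum : ∀ (k : ℕ) (h : Polynomial ℚ), h.natDegree ≤ k →
    ∃ G : Polynomial ℚ, G.natDegree ≤ k + 1 ∧
      ∀ t : ℕ, ∑ u ∈ range t, h.eval (u : ℚ) = G.eval (t : ℚ) := by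
  intro k
  induction k with
  | zero =>
    intro h hd
    obtain ⟨c0, rfl⟩ : ∃ c0, h = C c0 := ⟨_, Polynomial.eq_C_of_natDegree_le_zero hd⟩
    refine ⟨C c0 * X, ?_, ?_⟩
    · apply le_trans (Polynomial.natDegree_C_mul_le _ _); simp
    · intro t
      simp only [Polynomial.eval_C, Finset.sum_const, Finset.card_range, nsmul_eq_mul,
        Polynomial.eval_mul, Polynomial.eval_X]
      ring
  | succ k ih =>
    intro h hd
    by_cases hk : h.natDegree ≤ k
    · obtain ⟨G, hG1, hG2⟩ := ih h hk
      exact ⟨G, hG1.trans (by omega), hG2⟩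
    · have hdeg : h.natDegree = k + 1 := by omega
      have hne : h ≠ 0 := fun h0 => by simp [h0] at hk
      set c : ℚ := h.leadingCoeff with hc
      have hcne : c ≠ 0 := Polynomial.leadingCoeff_ne_zero.2 hne
      set B : Polynomial ℚ := X ^ (k + 2) with hB
      set D : Polynomial ℚ := B.comp (X + 1) - B with hD
      have hDcoeff : ∀ i, D.coeff i =
          ((k + 2).choose i : ℚ) - if k + 2 = i then 1 else 0 := by
        intro i
        rw [hD, hB, Polynomial.coeff_sub, Polynomial.X_pow_comp,
          Polynomial.coeff_X_add_one_pow, Polynomial.coeff_X_pow]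
        simp [eq_comm]
      have hDhigh : ∀ m, k + 1 < m → D.coeff m = 0 := by
        intro m hm
        rw [hDcoeff]
        rcases Nat.lt_or_ge m (k + 2) with h1 | h1
        · omega
        · rcases Nat.eq_or_lt_of_le h1 with rfl | h2
          · simp
          · rw [Nat.choose_eq_zero_of_lt h2, if_neg (by omega)]; simp
      have hDlead : D.coeff (k + 1) = ((k : ℚ) + 2) := by
        rw [hDcoeff, if_neg (by omega), Nat.choose_succ_self_right]
        push_cast; ring
      have hane : ((k : ℚ) + 2) ≠ 0 := by positivity
      have hDdeg : D.natDegree = k + 1 := by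
        apply le_antisymm
        · exact Polynomial.natDegree_le_iff_coeff_eq_zero.2 hDhigh
        · exact Polynomial.le_natDegree_of_ne_zero (by rw [hDlead]; exact hane)
      have hDne : D ≠ 0 := fun h0 => hane (by rw [h0] at hDlead; simpa using hDlead.symm)
      set a : ℚ := c / ((k : ℚ) + 2) with ha
      have hanz : a ≠ 0 := div_ne_zero hcne hane
      set h₂ : Polynomial ℚ := h - Polynomial.C a * D with hh₂
      have hdegeq : h.degree = (Polynomial.C a * D).degree := by
        rw [Polynomial.degree_C_mul hanz, Polynomial.degree_eq_natDegree hne,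
          Polynomial.degree_eq_natDegree hDne, hdeg, hDdeg]
      have hDlc : D.leadingCoeff = ((k : ℚ) + 2) := by
        rw [Polynomial.leadingCoeff, hDdeg]; exact hDlead
      have hlceq : h.leadingCoeff = (Polynomial.C a * D).leadingCoeff := by
        rw [Polynomial.leadingCoeff_mul, Polynomial.leadingCoeff_C, hDlc, ha]
        field_simp
        exact hc.symm
      have hh₂deg : h₂.natDegree ≤ k := by
        have hlt : h₂.degree < h.degree := Polynomial.degree_sub_lt hdegeq hne hlceq
        rw [Polynomial.degree_eq_natDegree hne, hdeg] at hlt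
        by_cases h0 : h₂ = 0
        · simp [h0]
        · have := (Polynomial.degree_eq_natDegree h0) ▸ hlt
          exact_mod_cast Nat.lt_succ_iff.mp (by exact_mod_cast this)
      obtain ⟨G₂, hG₂1, hG₂2⟩ := ih h₂ hh₂deg
      refine ⟨G₂ + Polynomial.C a * B, ?_, ?_⟩
      · apply le_trans (Polynomial.natDegree_add_le _ _)
        apply max_le (hG₂1.trans (by omega))
        apply le_trans (Polynomial.natDegree_C_mul_le _ _)
        simp [hB]
      · intro t
        have hsplit : ∀ u : ℕ, h.eval (u : ℚ) = h₂.eval (u : ℚ) + a * D.eval (u : ℚ) := by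
          intro u; rw [hh₂]; simp
        have hDsum : ∑ u ∈ range t, D.eval (u : ℚ) = B.eval (t : ℚ) := by
          have heq : ∀ u : ℕ, D.eval (u : ℚ) =
              B.eval ((u + 1 : ℕ) : ℚ) - B.eval ((u : ℕ) : ℚ) := by
            intro u; rw [hD]; push_cast
            simp only [Polynomial.eval_sub, Polynomial.eval_comp, Polynomial.eval_add,
              Polynomial.eval_X, Polynomial.eval_one]
          rw [Finset.sum_congr rfl fun u _ => heq u,
            Finset.sum_range_sub (fun u : ℕ => B.eval ((u : ℕ) : ℚ))]
          simp [hB]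
        rw [Finset.sum_congr rfl fun u _ => hsplit u, Finset.sum_add_distrib, hG₂2 t,
          ← Finset.mul_sum, hDsum]
        simp

lemma QP_sum (N s M d : ℕ) (hs : 0 < s) (hM : 0 < M) (hNM : N ∣ M) (hsM : s ∣ M)
    (P : ℕ → Polynomial ℚ) (hP : ∀ i, (P i).natDegree ≤ d)
    (f : ℕ → ℚ) (hf : ∀ n, f n = (P (n % N)).eval (n : ℚ))
    (g : ℕ → ℚ) (hg : ∀ n, g n = ∑ j ∈ range (n / s + 1), f (n - j * s)) :
    ∃ Q : ℕ → Polynomial ℚ, (∀ i, (Q i).natDegree ≤ d + 1) ∧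
      ∀ n : ℕ, g n = (Q (n % M)).eval (n : ℚ) := by
  obtain ⟨m, hm⟩ := hsM
  have hmpos : 0 < m := by
    rcases Nat.eq_zero_or_pos m with rfl | h
    · omega
    · exact h
  -- step identity
  have step : ∀ n : ℕ, g (n + M) = g n + ∑ j ∈ range m, f (n + M - j * s) := by
    intro n
    have hdiv : (n + M) / s = m + (n / s + 1) - 1 := by
      rw [hm, Nat.add_mul_div_left _ _ hs]
      generalize n / s = q
      omega
    rw [hg (n + M), hdiv]
    have : m + (n / s + 1) - 1 + 1 = m + (n / s + 1) := by
      generalize n / s = q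
      omega
    rw [this, Finset.sum_range_add]
    rw [hg n, add_comm]
    congr 1
    apply Finset.sum_congr rfl
    intro j hj
    congr 1
    have : (m + j) * s = M + j * s := by rw [add_mul, hm]; ring
    omega
  -- the polynomial H r with eval at n ≡ r [MOD M] giving the step sum
  set H : ℕ → Polynomial ℚ :=
    fun r => ∑ j ∈ range m, (P ((r + (M - j * s)) % N)).comp (X + C ((M - j * s : ℕ) : ℚ))
    with hH
  have hHdeg : ∀ r, (H r).natDegree ≤ d := by
    intro r
    apply Polynomial.natDegree_sum_le_of_forall_le
    intro j _
    rw [Polynomial.natDegree_comp, Polynomial.natDegree_X_add_C, mul_one]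
    exact hP _
  have hHeval : ∀ r < M, ∀ n : ℕ, n % M = r →
      (H r).eval (n : ℚ) = ∑ j ∈ range m, f (n + M - j * s) := by
    intro r hr n hn
    rw [hH]
    simp only [Polynomial.eval_finset_sum]
    apply Finset.sum_congr rfl
    intro j hj
    have hjs : j * s ≤ M := by
      rw [hm]
      have : j + 1 ≤ m := Finset.mem_range.1 hj
      calc j * s ≤ (m - 1) * s := Nat.mul_le_mul_right _ (by omega)
        _ ≤ m * s := Nat.mul_le_mul_right _ (by omega)
        _ = s * m := mul_comm _ _
    have hnat : n + M - j * s = n + (M - j * s) := by omega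
    have hmodN : (n + (M - j * s)) % N = (r + (M - j * s)) % N := by
      have h1 : n ≡ r [MOD M] := by
        unfold Nat.ModEq; rw [hn, Nat.mod_eq_of_lt hr]
      exact Nat.ModEq.add_right _ (h1.of_dvd hNM)
    rw [hf, hnat, hmodN]
    simp only [Polynomial.eval_comp, Polynomial.eval_add, Polynomial.eval_X, Polynomial.eval_C]
    push_cast
    ring_nf
  -- composed polynomial along residue class
  set h : ℕ → Polynomial ℚ := fun r => (H r).comp (C (M : ℚ) * X + C (r : ℚ)) with hh
  have hhdeg : ∀ r, (h r).natDegree ≤ d := by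
    intro r
    rw [hh]
    simp only
    rw [Polynomial.natDegree_comp, Polynomial.natDegree_linear (by exact_mod_cast hM.ne'), mul_one]
    exact hHdeg r
  have hheval : ∀ r u : ℕ, (h r).eval (u : ℚ) = (H r).eval ((r + M * u : ℕ) : ℚ) := by
    intro r u
    rw [hh]
    simp only [Polynomial.eval_comp, Polynomial.eval_add, Polynomial.eval_mul, Polynomial.eval_C,
      Polynomial.eval_X]
    push_cast
    ring_nf
  choose G hGdeg hGsum using fun r => poly_discrete_sum d (h r) (hhdeg r)
  -- g along residue class
  have gstep : ∀ r, r < M → ∀ t : ℕ, g (r + M * t) = g r + (G r).eval (t : ℚ) := by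
    intro r hr t
    induction t with
    | zero =>
      have h0 := hGsum r 0
      simp at h0 ⊢
      rw [← h0]
    | succ t ih =>
      have : r + M * (t + 1) = (r + M * t) + M := by ring
      rw [this, step, ih]
      have hmod : (r + M * t) % M = r := by
        rw [Nat.add_mul_mod_self_left, Nat.mod_eq_of_lt hr]
      rw [← hHeval r hr (r + M * t) hmod, ← hheval r t]
      have hs1 := hGsum r t
      have hs2 := hGsum r (t + 1)
      rw [Finset.sum_range_succ, hs1] at hs2
      push_cast at hs2 ⊢
      linarith [hs2]
  -- final polynomials
  set L : ℕ → Polynomial ℚ := fun r => C ((M : ℚ)⁻¹) * X + C (-(r : ℚ) / (M : ℚ)) with hL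
  have hMQ : (M : ℚ) ≠ 0 := by exact_mod_cast hM.ne'
  refine ⟨fun r => C (g r) + (G r).comp (L r), ?_, ?_⟩
  · intro i
    apply le_trans (Polynomial.natDegree_add_le _ _)
    apply max_le (by simp)
    rw [Polynomial.natDegree_comp, hL]
    simp only
    rw [Polynomial.natDegree_linear (inv_ne_zero hMQ), mul_one]
    exact hGdeg i
  · intro n
    set r := n % M with hrdef
    have hr : r < M := Nat.mod_lt _ hM
    have hn : n = r + M * (n / M) := by rw [hrdef, Nat.mod_add_div]
    have hn' : (n : ℚ) = (r : ℚ) + (M : ℚ) * ((n / M : ℕ) : ℚ) := by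
      exact_mod_cast congrArg (fun x : ℕ => (x : ℚ)) hn
    have heval : (L r).eval (n : ℚ) = ((n / M : ℕ) : ℚ) := by
      rw [hL]
      simp only [Polynomial.eval_add, Polynomial.eval_mul, Polynomial.eval_C, Polynomial.eval_X]
      rw [hn']
      field_simp
      ring
    simp only [Polynomial.eval_add, Polynomial.eval_C, Polynomial.eval_comp, heval]
    conv_lhs => rw [hn]
    exact gstep r hr (n / M)

lemma pS_sum (S : Finset ℕ) (s : ℕ) (hs : s ∈ S) (hspos : 0 < s) : ∀ n : ℕ,
    pS S n = ∑ j ∈ Finset.range (n / s + 1), pS (S.erase s) (n - j * s) := by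
  intro n
  induction n using Nat.strong_induction_on with
  | _ n ih =>
    rcases Nat.lt_or_ge n s with hlt | hge
    · rw [Nat.div_eq_of_lt hlt]
      simp [pS_lt S s n hlt]
    · have hn : n = (n - s) + s := by omega
      have hrec := pS_rec S s hs hspos (n - s)
      rw [← hn] at hrec
      have hdiv : n / s = (n - s) / s + 1 := by
        conv_lhs => rw [hn]
        rw [Nat.add_div_right _ hspos]
      have hR : ∑ j ∈ Finset.range (n / s + 1), pS (S.erase s) (n - j * s)
          = pS (S.erase s) n
            + ∑ j ∈ Finset.range ((n - s) / s + 1), pS (S.erase s) ((n - s) - j * s) := by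
        have hbody : ∀ j : ℕ, n - (j + 1) * s = (n - s) - j * s := by
          intro j
          have : (j + 1) * s = j * s + s := by ring
          omega
        rw [hdiv, Finset.sum_range_succ' (fun j => pS (S.erase s) (n - j * s)) ((n - s) / s + 1)]
        simp only [Nat.zero_mul, Nat.sub_zero]
        rw [add_comm]
        exact congrArg₂ (· + ·) rfl (Finset.sum_congr rfl fun j _ => by rw [hbody j])
      rw [hrec, ih (n - s) (by omega), hR]
      
lemma lcm_pos (S : Finset ℕ) (hS : S.Nonempty) (hpos : ∀ s ∈ S, 0 < s) : 0 < S.lcm id := by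
  rcases Nat.eq_zero_or_pos (S.lcm id) with h | h
  · rw [Finset.lcm_eq_zero_iff] at h
    obtain ⟨x, hx, hx0⟩ := h
    exact absurd (hpos x hx) (by simp [← hx0])
  · exact h

theorem main : ∀ (k : ℕ) (S : Finset ℕ), S.card = k + 1 → (∀ s ∈ S, 0 < s) →
    ∃ P : ℕ → Polynomial ℚ,
      (∀ i, (P i).natDegree ≤ S.card - 1) ∧
      ∀ n : ℕ, (pS S n : ℚ) = (P (n % S.lcm id)).eval (n : ℚ) := by
  intro k
  induction k with
  | zero =>
    intro S hcard hpos
    obtain ⟨s, rfl⟩ := Finset.card_eq_one.1 hcard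
    have hs : 0 < s := hpos s (by simp)
    have hlcm : ({s} : Finset ℕ).lcm id = s := by simp
    refine ⟨fun i => if i = 0 then 1 else 0, ?_, ?_⟩
    · intro i
      by_cases h : i = 0 <;> simp [h]
    · intro n
      rw [pS_singleton s hs n, hlcm]
      by_cases h : n % s = 0 <;> simp [h]
  | succ k ih =>
    intro S hcard hpos
    have hne : S.Nonempty := Finset.card_pos.1 (by omega)
    obtain ⟨s, hs⟩ := hne
    have hspos : 0 < s := hpos s hs
    set S' := S.erase s with hS'
    have hcard' : S'.card = k + 1 := by
      rw [hS', Finset.card_erase_of_mem hs]; omega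
    have hpos' : ∀ x ∈ S', 0 < x := fun x hx => hpos x (Finset.mem_of_mem_erase hx)
    obtain ⟨P', hP'deg, hP'⟩ := ih S' hcard' hpos'
    have hM : 0 < S.lcm id := lcm_pos S ⟨s, hs⟩ hpos
    have hNM : S'.lcm id ∣ S.lcm id := Finset.lcm_mono (Finset.erase_subset _ _)
    have hsM : s ∣ S.lcm id := Finset.dvd_lcm hs
    have hg : ∀ n : ℕ, ((pS S n : ℚ)) =
        ∑ j ∈ Finset.range (n / s + 1), ((pS S' (n - j * s) : ℚ)) := by
      intro n
      rw [pS_sum S s hs hspos n]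
      push_cast
      rfl
    obtain ⟨Q, hQdeg, hQ⟩ := QP_sum (S'.lcm id) s (S.lcm id) (S'.card - 1) hspos hM hNM hsM
      P' hP'deg (fun n => (pS S' n : ℚ)) hP' (fun n => (pS S n : ℚ)) hg
    refine ⟨Q, ?_, hQ⟩
    intro i
    have h1 := hQdeg i
    have h2 : S'.card - 1 + 1 = S.card - 1 := by omega
    omega

theorem pS_quasipolynomial (S : Finset ℕ) (hS : S.Nonempty) (hpos : ∀ s ∈ S, 0 < s) :
    ∃ P : ℕ → Polynomial ℚ,
      (∀ i < S.lcm id, (P i).natDegree ≤ S.card - 1) ∧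
      ∀ n : ℕ, (pS S n : ℚ) = (P (n % S.lcm id)).eval (n : ℚ) := by
  obtain ⟨k, hk⟩ : ∃ k, S.card = k + 1 := by
    have := Finset.card_pos.2 hS
    exact ⟨S.card - 1, by omega⟩
  obtain ⟨P, h1, h2⟩ := main k S hk hpos
  exact ⟨P, fun i _ => h1 i, h2⟩
end

section
/- For S = {1, 5, 10, 25}, the function p_S(n) (the number of ways to make change for n cents using pennies, nickels, dimes, and quarters) satisfies p_S(n) ~ n^3/7500 as n → ∞; precisely, the limit of p_S(n)/n^3 as n → ∞ equals 1/7500. -/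
open Finset

def A2 (m : ℕ) : Finset (ℕ × ℕ) :=
  (range (m+1) ×ˢ range (m+1)).filter fun t => t.1 + t.2 ≤ m

def A3 (m : ℕ) : Finset (ℕ × ℕ × ℕ) :=
  (range (m+1) ×ˢ range (m+1) ×ˢ range (m+1)).filter fun t => t.1 + t.2.1 + t.2.2 ≤ m

lemma mem_A2 {m : ℕ} {t : ℕ × ℕ} : t ∈ A2 m ↔ t.1 + t.2 ≤ m := by
  simp only [A2, mem_filter, mem_product, mem_range]; omega

lemma mem_A3 {m : ℕ} {t : ℕ × ℕ × ℕ} : t ∈ A3 m ↔ t.1 + t.2.1 + t.2.2 ≤ m := by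
  simp only [A3, mem_filter, mem_product, mem_range]; omega

lemma two_choose (n : ℕ) : 2 * (n+2).choose 2 = (n+1)*(n+2) := by
  induction n with
  | zero => decide
  | succ n ih =>
    rw [show n+1+2 = (n+2)+1 from rfl, Nat.choose_succ_succ, Nat.mul_add, ih,
      Nat.choose_one_right]
    ring

lemma six_choose (n : ℕ) : 6 * (n+3).choose 3 = (n+1)*(n+2)*(n+3) := by
  induction n with
  | zero => decide
  | succ n ih =>
    rw [show n+1+3 = (n+3)+1 from rfl, Nat.choose_succ_succ, Nat.mul_add, ih,
      show (6:ℕ) = 3*2 from rfl, Nat.mul_assoc, two_choose]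
    ring

lemma card_A2 (m : ℕ) : (A2 m).card = (m+2).choose 2 := by
  induction m with
  | zero => decide
  | succ m ih =>
    have h : A2 (m+1) =
        (range (m+2)).image (fun x => (x, 0)) ∪ (A2 m).image (fun t => (t.1, t.2+1)) := by
      ext ⟨x, y⟩
      simp only [mem_A2, mem_union, mem_image, mem_range, Prod.mk.injEq]
      constructor
      · intro h
        match y with
        | 0 => exact Or.inl ⟨x, by omega, rfl, rfl⟩
        | y+1 =>
          exact Or.inr ⟨(x, y), show (x,y).1 + (x,y).2 ≤ m by omega, rfl, rfl⟩
      · rintro (⟨a, ha, rfl, rfl⟩ | ⟨⟨a, b⟩, hab, h1, h2⟩)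
        · omega
        · have hab' : a + b ≤ m := hab
          have h1' : a = x := h1
          have h2' : b + 1 = y := h2
          omega
    have hdisj : Disjoint ((range (m+2)).image (fun x => (x, 0)))
        ((A2 m).image (fun t : ℕ × ℕ => (t.1, t.2+1))) := by
      simp only [disjoint_left, mem_image]
      rintro ⟨x, y⟩ ⟨a, _, ha⟩ ⟨b, _, hb⟩
      rw [← ha] at hb
      simp [Prod.ext_iff] at hb
    have hinj1 : Function.Injective (fun x : ℕ => (x, 0)) := fun a b h => by
      simpa using h
    have hinj2 : Function.Injective (fun t : ℕ × ℕ => (t.1, t.2+1)) := fun a b h => by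
      simp only [Prod.mk.injEq] at h; exact Prod.ext h.1 (by omega)
    rw [h, card_union_of_disjoint hdisj, card_image_of_injective _ hinj1,
      card_image_of_injective _ hinj2, card_range, ih]
    have hp : (m+1+2).choose 2 = (m+2).choose 1 + (m+2).choose 2 :=
      Nat.choose_succ_succ (m+2) 1
    rw [Nat.choose_one_right] at hp
    omega

lemma card_A3 (m : ℕ) : (A3 m).card = (m+3).choose 3 := by
  induction m with
  | zero => decide
  | succ m ih =>
    have h : A3 (m+1) =
        (A2 (m+1)).image (fun t => (t.1, t.2, 0)) ∪
        (A3 m).image (fun t => (t.1, t.2.1, t.2.2+1)) := by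
      ext ⟨x, y, z⟩
      simp only [mem_A3, mem_A2, mem_union, mem_image, Prod.mk.injEq]
      constructor
      · intro h
        match z with
        | 0 =>
          exact Or.inl ⟨(x, y), show x + y ≤ m+1 by omega, rfl, rfl, rfl⟩
        | z+1 =>
          exact Or.inr ⟨(x, y, z), show x + y + z ≤ m by omega, rfl, rfl, rfl⟩
      · rintro (⟨⟨a, b⟩, hab, h1, h2, h3⟩ | ⟨⟨a, b, c⟩, habc, h1, h2, h3⟩)
        · have hab' : a + b ≤ m + 1 := hab
          have h1' : a = x := h1
          have h2' : b = y := h2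
          have h3' : (0:ℕ) = z := h3
          omega
        · have habc' : a + b + c ≤ m := habc
          have h1' : a = x := h1
          have h2' : b = y := h2
          have h3' : c + 1 = z := h3
          omega
    have hdisj : Disjoint ((A2 (m+1)).image (fun t : ℕ × ℕ => (t.1, t.2, 0)))
        ((A3 m).image (fun t : ℕ × ℕ × ℕ => (t.1, t.2.1, t.2.2+1))) := by
      simp only [disjoint_left, mem_image]
      rintro ⟨x, y, z⟩ ⟨a, _, ha⟩ ⟨b, _, hb⟩
      rw [← ha] at hb
      simp [Prod.ext_iff] at hb
    have hinj1 : Function.Injective (fun t : ℕ × ℕ => (t.1, t.2, 0)) := fun a b h => by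
      simp only [Prod.mk.injEq] at h; exact Prod.ext h.1 h.2.1
    have hinj2 : Function.Injective (fun t : ℕ × ℕ × ℕ => (t.1, t.2.1, t.2.2+1)) :=
      fun a b h => by
        simp only [Prod.mk.injEq] at h; exact Prod.ext h.1 (Prod.ext h.2.1 (by omega))
    rw [h, card_union_of_disjoint hdisj, card_image_of_injective _ hinj1,
      card_image_of_injective _ hinj2, card_A2, ih]
    have hp : (m+1+3).choose 3 = (m+1+2).choose 2 + (m+3).choose 3 :=
      Nat.choose_succ_succ (m+3) 2
    omega

def Nfin (n : ℕ) : Finset (ℕ × ℕ × ℕ) :=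
  (range (n+1) ×ˢ range (n+1) ×ˢ range (n+1)).filter
    fun t => 5*t.1 + 10*t.2.1 + 25*t.2.2 ≤ n

lemma mem_Nfin {n : ℕ} {t : ℕ × ℕ × ℕ} :
    t ∈ Nfin n ↔ 5*t.1 + 10*t.2.1 + 25*t.2.2 ≤ n := by
  simp only [Nfin, mem_filter, mem_product, mem_range]; omega

lemma Nfin_lower (n : ℕ) : (n+3).choose 3 ≤ 1250 * (Nfin n).card := by
  have h : (A3 n).card ≤ ((Nfin n) ×ˢ (range 5 ×ˢ range 10 ×ˢ range 25)).card := by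
    apply Finset.card_le_card_of_injOn
      (fun t => ((t.1/5, t.2.1/10, t.2.2/25), (t.1%5, t.2.1%10, t.2.2%25)))
    · rintro ⟨x, y, z⟩ ht
      rw [mem_coe, mem_A3] at ht
      have ht' : x + y + z ≤ n := ht
      clear ht
      simp only [mem_coe, mem_product, mem_Nfin, mem_range]
      refine ⟨?_, ?_, ?_, ?_⟩
      · show 5 * (x / 5) + 10 * (y / 10) + 25 * (z / 25) ≤ n
        omega
      · show x % 5 < 5; omega
      · show y % 10 < 10; omega
      · show z % 25 < 25; omega
    · rintro ⟨a1, a2, a3⟩ - ⟨b1, b2, b3⟩ - h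
      simp only [Prod.mk.injEq] at h
      simp only [Prod.mk.injEq]
      omega
  rw [card_A3, Finset.card_product, Finset.card_product, Finset.card_product,
    card_range, card_range, card_range] at h
  omega

lemma Nfin_upper (n : ℕ) : 1250 * (Nfin n).card ≤ (n+40).choose 3 := by
  have h : ((Nfin n) ×ˢ (range 5 ×ˢ range 10 ×ˢ range 25)).card ≤ (A3 (n+37)).card := by
    apply Finset.card_le_card_of_injOn
      (fun t => (5*t.1.1 + t.2.1, 10*t.1.2.1 + t.2.2.1, 25*t.1.2.2 + t.2.2.2))
    · rintro ⟨⟨a1, a2, a3⟩, r1, r2, r3⟩ ht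
      simp only [mem_coe, mem_product, mem_Nfin, mem_range] at ht
      rw [mem_coe, mem_A3]
      show 5*a1 + r1 + (10*a2 + r2) + (25*a3 + r3) ≤ n + 37
      omega
    · rintro ⟨⟨a1, a2, a3⟩, r1, r2, r3⟩ ha ⟨⟨b1, b2, b3⟩, s1, s2, s3⟩ hb h
      simp only [mem_coe, mem_product, mem_Nfin, mem_range] at ha hb
      simp only [Prod.mk.injEq] at h
      have e1 : 5*a1 + r1 = 5*b1 + s1 := h.1
      have e2 : 10*a2 + r2 = 10*b2 + s2 := h.2.1
      have e3 : 25*a3 + r3 = 25*b3 + s3 := h.2.2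
      have hr : r1 < 5 ∧ r2 < 10 ∧ r3 < 25 := ⟨ha.2.1, ha.2.2.1, ha.2.2.2⟩
      have hs : s1 < 5 ∧ s2 < 10 ∧ s3 < 25 := ⟨hb.2.1, hb.2.2.1, hb.2.2.2⟩
      simp only [Prod.mk.injEq]
      omega
  rw [Finset.card_product, Finset.card_product, Finset.card_product,
    card_range, card_range, card_range, card_A3] at h
  have : (n+37+3).choose 3 = (n+40).choose 3 := by norm_num
  omega

lemma multiset_decomp (s : Multiset ℕ) (hs : ∀ x ∈ s, x ∈ ({1,5,10,25} : Finset ℕ)) :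
    s = Multiset.replicate (s.count 1) 1 + Multiset.replicate (s.count 5) 5 +
        Multiset.replicate (s.count 10) 10 + Multiset.replicate (s.count 25) 25 := by
  ext x
  simp only [Multiset.count_add, Multiset.count_replicate]
  by_cases h1 : x = 1
  · subst h1; simp
  by_cases h5 : x = 5
  · subst h5; simp
  by_cases h10 : x = 10
  · subst h10; simp
  by_cases h25 : x = 25
  · subst h25; simp
  have hx : x ∉ s := fun hx => by have := hs x hx; simp at this; tauto
  rw [Multiset.count_eq_zero_of_notMem hx]
  split_ifs <;> omega

lemma multiset_sum (s : Multiset ℕ) (hs : ∀ x ∈ s, x ∈ ({1,5,10,25} : Finset ℕ)) :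
    s.sum = s.count 1 + 5 * s.count 5 + 10 * s.count 10 + 25 * s.count 25 := by
  conv_lhs => rw [multiset_decomp s hs]
  simp only [Multiset.sum_add, Multiset.sum_replicate, smul_eq_mul]
  ring

def coinMS (n b c d : ℕ) : Multiset ℕ :=
  Multiset.replicate (n - (5*b + 10*c + 25*d)) 1 + Multiset.replicate b 5 +
    Multiset.replicate c 10 + Multiset.replicate d 25

lemma coinMS_mem {n b c d x : ℕ} (hx : x ∈ coinMS n b c d) :
    x = 1 ∨ x = 5 ∨ x = 10 ∨ x = 25 := by
  simp only [coinMS, Multiset.mem_add] at hx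
  rcases hx with ((hx|hx)|hx)|hx <;>
    simp [Multiset.eq_of_mem_replicate hx]

lemma coinMS_sum {n b c d : ℕ} (h : 5*b + 10*c + 25*d ≤ n) : (coinMS n b c d).sum = n := by
  simp only [coinMS, Multiset.sum_add, Multiset.sum_replicate, smul_eq_mul]
  omega

def coinEquiv (n : ℕ) :
    {p : n.Partition // ∀ x ∈ p.parts, x ∈ ({1,5,10,25} : Finset ℕ)} ≃ {t // t ∈ Nfin n} where
  toFun p := ⟨(p.1.parts.count 5, p.1.parts.count 10, p.1.parts.count 25), by
    rw [mem_Nfin]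
    have h1 := multiset_sum p.1.parts p.2
    have h2 := p.1.parts_sum
    show 5 * p.1.parts.count 5 + 10 * p.1.parts.count 10 + 25 * p.1.parts.count 25 ≤ n
    omega⟩
  invFun t := ⟨⟨coinMS n t.1.1 t.1.2.1 t.1.2.2,
      fun hi => by rcases coinMS_mem hi with h|h|h|h <;> omega,
      coinMS_sum (mem_Nfin.1 t.2)⟩,
    fun x hx => by rcases coinMS_mem hx with h|h|h|h <;> simp [h]⟩
  left_inv p := by
    obtain ⟨⟨s, hpos, hsum⟩, hp⟩ := p
    apply Subtype.ext
    apply Nat.Partition.ext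
    show coinMS n (s.count 5) (s.count 10) (s.count 25) = s
    have h1 := multiset_sum s hp
    have hc1 : n - (5 * s.count 5 + 10 * s.count 10 + 25 * s.count 25) = s.count 1 := by
      omega
    rw [coinMS, hc1]
    exact (multiset_decomp s hp).symm
  right_inv t := by
    obtain ⟨⟨b, c, d⟩, ht⟩ := t
    rw [mem_Nfin] at ht
    apply Subtype.ext
    show (((coinMS n b c d).count 5, (coinMS n b c d).count 10, (coinMS n b c d).count 25))
      = (b, c, d)
    simp [coinMS, Multiset.count_replicate]

lemma pS_eq (n : ℕ) : pS {1,5,10,25} n = (Nfin n).card := by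
  rw [pS, Fintype.card_congr (coinEquiv n), Fintype.card_coe]


lemma pS_lower (n : ℕ) : (n+1)*(n+2)*(n+3) ≤ 7500 * pS {1,5,10,25} n := by
  rw [pS_eq]
  calc (n+1)*(n+2)*(n+3) = 6 * ((n+3).choose 3) := (six_choose n).symm
    _ ≤ 6 * (1250 * (Nfin n).card) := Nat.mul_le_mul_left 6 (Nfin_lower n)
    _ = 7500 * (Nfin n).card := by ring

lemma pS_upper (n : ℕ) : 7500 * pS {1,5,10,25} n ≤ (n+38)*(n+39)*(n+40) := by
  rw [pS_eq]
  have h6 : 6 * ((n+40).choose 3) = (n+38)*(n+39)*(n+40) := by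
    have h := six_choose (n+37)
    have e1 : n+37+3 = n+40 := by omega
    have e2 : n+37+1 = n+38 := by omega
    have e3 : n+37+2 = n+39 := by omega
    rw [e1, e2, e3] at h
    exact h
  calc 7500 * (Nfin n).card = 6 * (1250 * (Nfin n).card) := by ring
    _ ≤ 6 * ((n+40).choose 3) := Nat.mul_le_mul_left 6 (Nfin_upper n)
    _ = (n+38)*(n+39)*(n+40) := h6

open Filter in
lemma cube_tendsto (a b c : ℕ) :
    Tendsto (fun n : ℕ => (((n:ℝ)+a)*((n:ℝ)+b)*((n:ℝ)+c)) / (7500*(n:ℝ)^3)) atTop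
      (nhds (1/7500)) := by
  have h0 : Tendsto (fun n : ℕ => (1:ℝ)/n) atTop (nhds 0) :=
    tendsto_one_div_atTop_nhds_zero_nat
  have ha : ∀ (a : ℕ), Tendsto (fun n : ℕ => 1 + (a:ℝ)/n) atTop (nhds 1) := by
    intro a
    have h1 := h0.const_mul (a:ℝ)
    have h2 := (tendsto_const_nhds (x := (1:ℝ)) (f := atTop (α := ℕ))).add h1
    simpa [mul_one_div, div_eq_mul_inv] using h2
  have hmain := (((ha a).mul (ha b)).mul (ha c)).div_const 7500
  norm_num at hmain
  apply hmain.congr'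
  filter_upwards [eventually_ge_atTop 1] with n hn
  have hn0 : (n:ℝ) ≠ 0 := Nat.cast_ne_zero.2 (by omega)
  field_simp

open Filter in
theorem coin_change_asymptotic :
    Tendsto (fun n : ℕ => (pS {1, 5, 10, 25} n : ℝ) / (n : ℝ) ^ 3) atTop
      (nhds (1 / 7500)) := by
  apply tendsto_of_tendsto_of_tendsto_of_le_of_le' (cube_tendsto 1 2 3) (cube_tendsto 38 39 40)
  · filter_upwards [eventually_ge_atTop 1] with n hn
    have hp := pS_lower n
    have hn0 : (0:ℝ) < (n:ℝ)^3 := by positivity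
    rw [show (pS {1,5,10,25} n : ℝ) / (n:ℝ)^3
        = (7500 * (pS {1,5,10,25} n : ℝ)) / (7500 * (n:ℝ)^3) from
      (mul_div_mul_left _ _ (by norm_num)).symm]
    rw [div_le_div_iff_of_pos_right (by positivity)]
    exact_mod_cast hp
  · filter_upwards [eventually_ge_atTop 1] with n hn
    have hp := pS_upper n
    have hn0 : (0:ℝ) < (n:ℝ)^3 := by positivity
    rw [show (pS {1,5,10,25} n : ℝ) / (n:ℝ)^3
        = (7500 * (pS {1,5,10,25} n : ℝ)) / (7500 * (n:ℝ)^3) from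
      (mul_div_mul_left _ _ (by norm_num)).symm]
    rw [div_le_div_iff_of_pos_right (by positivity)]
    exact_mod_cast hp
end

section
/- For every positive integer m, the limit as n → ∞ of p_m(n)/n^{m-1} equals 1/(m!·(m-1)!). -/
open Multiset Finset Filter

section StarsAndBars

lemma sum_replicate_count {α : Type*} [Fintype α] [DecidableEq α] (s : Multiset α) :
    (∑ a : α, Multiset.replicate (s.count a) a) = s := by
  have h1 : ∑ a ∈ s.toFinset, Multiset.replicate (s.count a) a = s := by
    have := Multiset.toFinset_sum_count_nsmul_eq s
    simpa [← Multiset.nsmul_singleton] using this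
  calc (∑ a : α, Multiset.replicate (s.count a) a)
      = ∑ a ∈ s.toFinset, Multiset.replicate (s.count a) a := by
        refine (Finset.sum_subset (Finset.subset_univ s.toFinset) ?_).symm
        intro a _ ha
        rw [Multiset.count_eq_zero_of_notMem (by simpa using ha), Multiset.replicate_zero]
    _ = s := h1

lemma card_sum_multiset {α β : Type*} (s : Finset α) (f : α → Multiset β) :
    Multiset.card (∑ a ∈ s, f a) = ∑ a ∈ s, Multiset.card (f a) :=
  map_sum (⟨⟨(Multiset.card : Multiset β → ℕ), Multiset.card_zero⟩, Multiset.card_add⟩ :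
    Multiset β →+ ℕ) f s

/-- Tuples with a given sum correspond to multisets over `Fin m`. -/
def tupleSymEquiv (m N : ℕ) : {f : Fin m → ℕ // ∑ i, f i = N} ≃ Sym (Fin m) N where
  toFun f := ⟨∑ i, Multiset.replicate (f.1 i) i, by
    simp [Sym.instMembership, card_sum_multiset, f.2]⟩
  invFun s := ⟨fun i => s.1.count i, by
    have := congrArg Multiset.card (sum_replicate_count s.1)
    rw [card_sum_multiset] at this
    simpa [s.2] using this⟩
  left_inv f := by
    ext i
    simp [Multiset.count_sum', Multiset.count_replicate]
  right_inv s := by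
    ext1
    exact sum_replicate_count s.1

instance tupleFinite (m N : ℕ) : Finite {f : Fin m → ℕ // ∑ i, f i = N} :=
  Finite.of_equiv _ (tupleSymEquiv m N).symm

/-- Stars and bars: the number of `m`-tuples of naturals summing to `N`. -/
lemma card_tuple (m N : ℕ) (hm : 0 < m) :
    Nat.card {f : Fin m → ℕ // ∑ i, f i = N} = (N + m - 1).choose (m - 1) := by
  rw [Nat.card_congr (tupleSymEquiv m N), Nat.card_eq_fintype_card,
    Sym.card_sym_eq_choose, Fintype.card_fin, add_comm m N,
    ← Nat.choose_symm (by omega : N ≤ N + m - 1)]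
  congr 1
  omega

end StarsAndBars

section Machinery

variable {m : ℕ}

/-- Monotone enumeration of a multiset of naturals with `card = m`. -/
noncomputable def mEnum (s : Multiset ℕ) (h : Multiset.card s = m) : Fin m → ℕ :=
  fun i => (s.sort (· ≤ ·)).get (Fin.cast (by rw [Multiset.length_sort, h]) i)

lemma mEnum_monotone (s : Multiset ℕ) (h : Multiset.card s = m) : Monotone (mEnum s h) := by
  intro i j hij
  exact (Multiset.pairwise_sort s _).rel_get_of_le (by simpa using hij)

lemma ofFn_mEnum (s : Multiset ℕ) (h : Multiset.card s = m) :
    (↑(List.ofFn (mEnum s h)) : Multiset ℕ) = s := by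
  have : List.ofFn (mEnum s h) = s.sort (· ≤ ·) := by
    apply List.ext_get
    · simp [Multiset.length_sort, h]
    · intro i h1 h2
      simp [mEnum, List.get_ofFn]
  rw [this, Multiset.sort_eq]

lemma monotone_eq_of_ofFn_eq {f g : Fin m → ℕ} (hf : Monotone f) (hg : Monotone g)
    (h : (↑(List.ofFn f) : Multiset ℕ) = ↑(List.ofFn g)) : f = g :=
  List.ofFn_injective <|
    List.Perm.eq_of_sortedLE hf.sortedLE_ofFn hg.sortedLE_ofFn (Multiset.coe_eq_coe.mp h)

lemma ofFn_comp_perm (x : Fin m → ℕ) (σ : Equiv.Perm (Fin m)) :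
    (↑(List.ofFn (x ∘ σ)) : Multiset ℕ) = ↑(List.ofFn x) :=
  Multiset.coe_eq_coe.mpr (σ.ofFn_comp_perm x)

/-- The padded multiset of a partition: parts together with zeros up to length `m`. -/
def mPad {n : ℕ} (p : n.Partition) : Multiset ℕ :=
  p.parts + Multiset.replicate (m - Multiset.card p.parts) 0

lemma mPad_card {n : ℕ} (p : n.Partition) (h : Multiset.card p.parts ≤ m) :
    Multiset.card (mPad (m := m) p) = m := by
  simp [mPad]; omega

lemma mPad_sum {n : ℕ} (p : n.Partition) : (mPad (m := m) p).sum = n := by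
  simp [mPad, Multiset.sum_replicate, p.parts_sum]

lemma mPad_filter {n : ℕ} (p : n.Partition) :
    (mPad (m := m) p).filter (fun a => 0 < a) = p.parts := by
  rw [mPad, Multiset.filter_add, Multiset.filter_eq_self.mpr (fun a ha => p.parts_pos ha),
    Multiset.filter_eq_nil.mpr, add_zero]
  intro a ha
  simp [Multiset.eq_of_mem_replicate ha]

lemma mPad_inj {n : ℕ} {p q : n.Partition} (h : mPad (m := m) p = mPad (m := m) q) : p = q := by
  ext1
  rw [← mPad_filter (m := m) p, ← mPad_filter (m := m) q, h]

/-- The partition associated to a tuple: the multiset of its nonzero values. -/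
def toPart {n : ℕ} (x : Fin m → ℕ) (hx : ∑ i, x i = n) :
    {p : n.Partition // Multiset.card p.parts ≤ m} :=
  ⟨⟨(↑(List.ofFn x) : Multiset ℕ).filter (fun a => 0 < a),
    fun hi => (Multiset.mem_filter.mp hi).2,
    by
      have h2 : ((↑(List.ofFn x) : Multiset ℕ).filter (fun a => ¬ 0 < a)).sum = 0 := by
        apply Multiset.sum_eq_zero
        intro a ha
        have := (Multiset.mem_filter.mp ha).2
        omega
      have h3 := Multiset.filter_add_not (fun a => 0 < a) (↑(List.ofFn x) : Multiset ℕ)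
      have h4 := congrArg Multiset.sum h3
      rw [Multiset.sum_add, h2, add_zero] at h4
      rw [h4]
      simpa [List.sum_ofFn] using hx⟩,
    by
      calc Multiset.card (Multiset.filter _ _) ≤ Multiset.card (↑(List.ofFn x) : Multiset ℕ) :=
            Multiset.card_le_card (Multiset.filter_le _ _)
        _ = m := by simp⟩

lemma ofFn_eq_of_toPart_eq {n : ℕ} {x y : Fin m → ℕ} {hx : ∑ i, x i = n} {hy : ∑ i, y i = n}
    (h : toPart x hx = toPart y hy) : (↑(List.ofFn x) : Multiset ℕ) = ↑(List.ofFn y) := by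
  have hparts : (↑(List.ofFn x) : Multiset ℕ).filter (fun a => 0 < a)
      = (↑(List.ofFn y) : Multiset ℕ).filter (fun a => 0 < a) := by
    have := congrArg (fun p => p.1.parts) h
    simpa [toPart] using this
  have key : ∀ z : Fin m → ℕ, (↑(List.ofFn z) : Multiset ℕ)
      = (↑(List.ofFn z) : Multiset ℕ).filter (fun a => 0 < a)
        + Multiset.replicate
            (m - Multiset.card ((↑(List.ofFn z) : Multiset ℕ).filter (fun a => 0 < a))) 0 := by
    intro z
    set s := (↑(List.ofFn z) : Multiset ℕ)
    have h3 := (Multiset.filter_add_not (fun a => 0 < a) s).symm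
    conv_lhs => rw [h3]
    congr 1
    rw [Multiset.eq_replicate]
    constructor
    · have hc := congrArg Multiset.card (Multiset.filter_add_not (fun a => 0 < a) s)
      rw [Multiset.card_add] at hc
      have hcs : Multiset.card s = m := by simp [s]
      omega
    · intro b hb
      have := (Multiset.mem_filter.mp hb).2
      omega
  rw [key x, key y, hparts]

lemma lower_bound (hm : 0 < m) (n : ℕ) :
    (n + m - 1).choose (m - 1) ≤
      Nat.factorial m * Fintype.card {p : n.Partition // Multiset.card p.parts ≤ m} := by
  classical
  set Φ : {f : Fin m → ℕ // ∑ i, f i = n} →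
      {p : n.Partition // Multiset.card p.parts ≤ m} × Equiv.Perm (Fin m) :=
    fun x => (toPart x.1 x.2, Tuple.sort x.1) with hΦ
  have hinj : Function.Injective Φ := by
    intro x y h
    have h1 : toPart x.1 x.2 = toPart y.1 y.2 := congrArg Prod.fst h
    have h2 : Tuple.sort x.1 = Tuple.sort y.1 := congrArg Prod.snd h
    have hm1 := ofFn_eq_of_toPart_eq h1
    have h3 : x.1 ∘ Tuple.sort x.1 = y.1 ∘ Tuple.sort y.1 :=
      monotone_eq_of_ofFn_eq (Tuple.monotone_sort _) (Tuple.monotone_sort _)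
        (by rw [ofFn_comp_perm, ofFn_comp_perm, hm1])
    apply Subtype.ext
    funext i
    have := congrFun h3 ((Tuple.sort x.1)⁻¹ i)
    simpa [h2, Function.comp] using this
  have hcard := Nat.card_le_card_of_injective Φ hinj
  rw [card_tuple m n hm, Nat.card_prod, Nat.card_eq_fintype_card, Nat.card_eq_fintype_card,
    Fintype.card_perm, Fintype.card_fin] at hcard
  calc (n + m - 1).choose (m - 1) ≤ _ := hcard
    _ = _ := by ring

lemma upper_bound (hm : 0 < m) (n : ℕ) :
    Nat.factorial m * Fintype.card {p : n.Partition // Multiset.card p.parts ≤ m} ≤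
      (n + (∑ i : Fin m, (i : ℕ)) + m - 1).choose (m - 1) := by
  classical
  -- the strictly increasing "staircase" tuple of a partition
  set b : {p : n.Partition // Multiset.card p.parts ≤ m} → Fin m → ℕ :=
    fun p i => mEnum (mPad (m := m) p.1) (mPad_card p.1 p.2) i + i with hb
  have hbmono : ∀ p, StrictMono (b p) := by
    intro p
    exact (mEnum_monotone _ _).add_strictMono (fun i j hij => by exact_mod_cast hij)
  have hbsum : ∀ (p : {p : n.Partition // Multiset.card p.parts ≤ m}) (σ : Equiv.Perm (Fin m)),
      (∑ i, b p (σ i)) = n + ∑ i : Fin m, (i : ℕ) := by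
    intro p σ
    rw [Equiv.sum_comp σ (b p)]
    have h1 : (∑ i, b p i) = (∑ i, mEnum (mPad (m := m) p.1) (mPad_card p.1 p.2) i)
        + ∑ i : Fin m, (i : ℕ) := Finset.sum_add_distrib
    have h2 : (∑ i, mEnum (mPad (m := m) p.1) (mPad_card p.1 p.2) i) = n := by
      have := congrArg Multiset.sum (ofFn_mEnum (mPad (m := m) p.1) (mPad_card p.1 p.2))
      rw [Multiset.sum_coe, List.sum_ofFn, mPad_sum] at this
      exact this
    rw [h1, h2]
  set Ψ : {p : n.Partition // Multiset.card p.parts ≤ m} × Equiv.Perm (Fin m) →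
      {f : Fin m → ℕ // ∑ i, f i = n + ∑ i : Fin m, (i : ℕ)} :=
    fun pσ => ⟨b pσ.1 ∘ pσ.2, hbsum pσ.1 pσ.2⟩ with hΨ
  have hinj : Function.Injective Ψ := by
    rintro ⟨p, σ⟩ ⟨q, τ⟩ h
    have h0 : b p ∘ σ = b q ∘ τ := congrArg Subtype.val h
    have hbb : b p = b q := by
      apply monotone_eq_of_ofFn_eq (hbmono p).monotone (hbmono q).monotone
      rw [← ofFn_comp_perm (b p) σ, ← ofFn_comp_perm (b q) τ, h0]
    have hpq : p = q := by
      have henum : mEnum (mPad (m := m) p.1) (mPad_card p.1 p.2)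
          = mEnum (mPad (m := m) q.1) (mPad_card q.1 q.2) := by
        funext i
        have := congrFun hbb i
        simp only [hb] at this
        omega
      apply Subtype.ext
      apply mPad_inj (m := m)
      rw [← ofFn_mEnum (mPad (m := m) p.1) (mPad_card p.1 p.2),
        ← ofFn_mEnum (mPad (m := m) q.1) (mPad_card q.1 q.2), henum]
    subst hpq
    have hστ : σ = τ := by
      apply Equiv.ext
      intro i
      exact (hbmono p).injective (by simpa [hbb] using congrFun h0 i)
    rw [hστ]
  have hcard := Nat.card_le_card_of_injective Ψ hinj
  rw [card_tuple m _ hm, Nat.card_prod, Nat.card_eq_fintype_card, Nat.card_eq_fintype_card,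
    Fintype.card_perm, Fintype.card_fin] at hcard
  calc Nat.factorial m * Fintype.card {p : n.Partition // Multiset.card p.parts ≤ m}
      = Fintype.card {p : n.Partition // Multiset.card p.parts ≤ m} * Nat.factorial m := by ring
    _ ≤ _ := hcard

end Machinery

section Analysis

lemma tend_factor (d : ℕ) : Tendsto (fun n : ℕ => ((n : ℝ) + d) / n) atTop (nhds 1) := by
  have h : Tendsto (fun n : ℕ => (d : ℝ) / n) atTop (nhds 0) :=
    Tendsto.div_atTop tendsto_const_nhds tendsto_natCast_atTop_atTop
  have h2 : Tendsto (fun n : ℕ => 1 + (d : ℝ) / n) atTop (nhds (1 + 0)) :=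
    tendsto_const_nhds.add h
  rw [add_zero] at h2
  apply h2.congr'
  filter_upwards [eventually_ge_atTop 1] with n hn
  have hn0 : (n : ℝ) ≠ 0 := by
    have : (1 : ℝ) ≤ n := by exact_mod_cast hn
    linarith
  field_simp

lemma choose_div_pow_tendsto (k c : ℕ) (hc : ∀ j < k, j ≤ c) :
    Tendsto (fun n : ℕ => ((n + c).choose k : ℝ) / (n : ℝ) ^ k) atTop
      (nhds (1 / (Nat.factorial k : ℝ))) := by
  have hprod : Tendsto (fun n : ℕ => ∏ j ∈ range k, (((n : ℝ) + ((c - j : ℕ) : ℝ)) / n))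
      atTop (nhds 1) := by
    have h := tendsto_finset_prod (f := fun j (n : ℕ) => ((n : ℝ) + ((c - j : ℕ) : ℝ)) / n)
      (range k) (fun j _ => tend_factor (c - j))
    simpa using h
  have h2 : Tendsto (fun n : ℕ => (1 / (Nat.factorial k : ℝ)) *
      ∏ j ∈ range k, (((n : ℝ) + ((c - j : ℕ) : ℝ)) / n)) atTop
      (nhds ((1 / (Nat.factorial k : ℝ)) * 1)) := tendsto_const_nhds.mul hprod
  rw [mul_one] at h2
  apply h2.congr'
  filter_upwards [eventually_ge_atTop 1] with n hn
  have hn0 : (n : ℝ) ≠ 0 := by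
    have : (1 : ℝ) ≤ n := by exact_mod_cast hn
    linarith
  have hnat : (∏ j ∈ range k, (n + c - j)) = Nat.factorial k * (n + c).choose k := by
    rw [← Nat.descFactorial_eq_prod_range, Nat.descFactorial_eq_factorial_mul_choose]
  have hcast : (∏ j ∈ range k, (((n : ℝ) + ((c - j : ℕ) : ℝ)))) =
      ((Nat.factorial k * (n + c).choose k : ℕ) : ℝ) := by
    rw [← hnat]
    push_cast
    apply Finset.prod_congr rfl
    intro j hj
    have hj' : j ≤ c := hc j (Finset.mem_range.mp hj)
    have : n + c - j = n + (c - j) := by omega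
    rw [this]
    push_cast [Nat.cast_sub hj']
    ring
  rw [Finset.prod_div_distrib, Finset.prod_const, Finset.card_range, hcast]
  push_cast
  field_simp

end Analysis

open Filter in
theorem pParts_asymptotic (m : ℕ) (hm : 0 < m) :
    Tendsto (fun n : ℕ => (pParts m n : ℝ) / (n : ℝ) ^ (m - 1)) atTop
      (nhds (1 / (Nat.factorial m * Nat.factorial (m - 1)))) := by
  classical
  set k := m - 1 with hk
  set c := ∑ i : Fin m, (i : ℕ) with hc
  have hfac : (0 : ℝ) < Nat.factorial m := by exact_mod_cast Nat.factorial_pos m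
  have hlo : Tendsto (fun n : ℕ => (1 / (Nat.factorial m : ℝ)) *
      (((n + k).choose k : ℝ) / (n : ℝ) ^ k)) atTop
      (nhds ((1 / (Nat.factorial m : ℝ)) * (1 / (Nat.factorial k : ℝ)))) :=
    tendsto_const_nhds.mul (choose_div_pow_tendsto k k (fun j hj => hj.le))
  have hhi : Tendsto (fun n : ℕ => (1 / (Nat.factorial m : ℝ)) *
      (((n + (c + k)).choose k : ℝ) / (n : ℝ) ^ k)) atTop
      (nhds ((1 / (Nat.factorial m : ℝ)) * (1 / (Nat.factorial k : ℝ)))) :=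
    tendsto_const_nhds.mul (choose_div_pow_tendsto k (c + k) (fun j hj => by omega))
  have htarget : ((1 / (Nat.factorial m : ℝ)) * (1 / (Nat.factorial k : ℝ)))
      = 1 / ((Nat.factorial m : ℝ) * (Nat.factorial (m - 1) : ℝ)) := by
    rw [one_div_mul_one_div]
  rw [show (1 : ℝ) / (Nat.factorial m * Nat.factorial (m - 1)) =
      (1 / (Nat.factorial m : ℝ)) * (1 / (Nat.factorial k : ℝ)) from htarget.symm]
  apply tendsto_of_tendsto_of_tendsto_of_le_of_le' hlo hhi
  · filter_upwards [eventually_ge_atTop 1] with n hn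
    have hpow : (0 : ℝ) < (n : ℝ) ^ k := by positivity
    have h1 : ((n + k).choose k : ℝ) ≤ (Nat.factorial m * pParts m n : ℕ) := by
      exact_mod_cast (show (n + k).choose k ≤ Nat.factorial m * pParts m n by
        have := lower_bound hm n
        have he : n + m - 1 = n + k := by omega
        rw [he] at this
        exact this)
    calc (1 / (Nat.factorial m : ℝ)) * (((n + k).choose k : ℝ) / (n : ℝ) ^ k)
        ≤ (1 / (Nat.factorial m : ℝ)) *
            (((Nat.factorial m * pParts m n : ℕ) : ℝ) / (n : ℝ) ^ k) := by
          gcongr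
      _ = (pParts m n : ℝ) / (n : ℝ) ^ k := by
          push_cast
          field_simp
  · filter_upwards [eventually_ge_atTop 1] with n hn
    have hpow : (0 : ℝ) < (n : ℝ) ^ k := by positivity
    have h1 : ((Nat.factorial m * pParts m n : ℕ) : ℝ) ≤ ((n + (c + k)).choose k : ℝ) := by
      exact_mod_cast (show Nat.factorial m * pParts m n ≤ (n + (c + k)).choose k by
        have := upper_bound hm n
        have he : n + c + m - 1 = n + (c + k) := by omega
        rw [he] at this
        exact this)
    calc (pParts m n : ℝ) / (n : ℝ) ^ k
        = (1 / (Nat.factorial m : ℝ)) *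
            (((Nat.factorial m * pParts m n : ℕ) : ℝ) / (n : ℝ) ^ k) := by
          push_cast
          field_simp
      _ ≤ (1 / (Nat.factorial m : ℝ)) * (((n + (c + k)).choose k : ℝ) / (n : ℝ) ^ k) := by
          gcongr
end
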